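/- Let R have density f(r) = 2r·1_{[0,1]}(r) and S have density h(t) = (1/(π√(1−t²)))·1_{|t|<1}, with R and S independent. Then the product η = R·S has density f_η(t) = (2/π)√(1−t²)·1_{|t|<1} (the semicircle law). -/

import Mathlib

open MeasureTheory Real
open scoped ENNReal

namespace ProductSemicircleAux

/-- Measurability of the arcsine density. -/
lemma hDen_meas : Measurable (fun t : ℝ => ENNReal.ofReal
    (if |t| < 1 then 1 / (π * Real.sqrt (1 - t ^ 2)) else 0)) := by
  apply Measurable.ennreal_ofReal
  apply Measurable.ite
  · exact measurableSet_lt (continuous_abs.measurable) measurable_const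
  · exact measurable_const.div
      (measurable_const.mul (Real.continuous_sqrt.measurable.comp (by fun_prop)))
  · exact measurable_const

lemma fDen_meas : Measurable (fun r : ℝ => ENNReal.ofReal
    (if r ∈ Set.Icc (0 : ℝ) 1 then 2 * r else 0)) := by
  apply Measurable.ennreal_ofReal
  exact Measurable.ite measurableSet_Icc (by fun_prop) measurable_const

/-- Change of variables `y ↦ x * y` for lower Lebesgue integrals. -/
lemma lintegral_comp_const_mul (x : ℝ) (hx : 0 < x) {Φ : ℝ → ℝ≥0∞} (hΦ : Measurable Φ) :
    ∫⁻ y : ℝ, Φ (x * y) = ENNReal.ofReal x⁻¹ * ∫⁻ s : ℝ, Φ s := by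
  have h1 := lintegral_map (μ := volume) hΦ (measurable_const_mul x)
  rw [Real.map_volume_mul_left (ne_of_gt hx), lintegral_smul_measure,
    abs_of_pos (inv_pos.mpr hx)] at h1
  exact h1.symm

/-- The basic FTC computation: `∫_{|t|}^1 (2/π) x/√(x²-t²) dx = (2/π)√(1-t²)`. -/
lemma sqrt_lintegral (t : ℝ) (ht : |t| < 1) :
    ∫⁻ x in Set.Ioc |t| 1, ENNReal.ofReal (2 / π * (x / Real.sqrt (x ^ 2 - t ^ 2)))
      = ENNReal.ofReal (2 / π * Real.sqrt (1 - t ^ 2)) := by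
  have hab : |t| ≤ 1 := ht.le
  set F : ℝ → ℝ := fun x => 2 / π * Real.sqrt (x ^ 2 - t ^ 2) with hF
  set F' : ℝ → ℝ := fun x => 2 / π * (x / Real.sqrt (x ^ 2 - t ^ 2)) with hF'
  have hcont : ContinuousOn F (Set.Icc |t| 1) := by
    apply Continuous.continuousOn
    exact continuous_const.mul (Real.continuous_sqrt.comp (by fun_prop))
  have hderiv : ∀ x ∈ Set.Ioo |t| 1, HasDerivAt F (F' x) x := by
    intro x hx
    have h0 : 0 < x ^ 2 - t ^ 2 := by nlinarith [sq_abs t, hx.1, abs_nonneg t]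
    have h1 : HasDerivAt (fun x : ℝ => x ^ 2 - t ^ 2) (2 * x) x := by
      simpa using (hasDerivAt_pow 2 x).sub_const (t ^ 2)
    have h2 := (h1.sqrt (ne_of_gt h0)).const_mul (2 / π)
    convert h2 using 1
    have hs : Real.sqrt (x ^ 2 - t ^ 2) ≠ 0 := (Real.sqrt_pos.mpr h0).ne'
    show 2 / π * (x / √(x ^ 2 - t ^ 2)) = _
    rw [mul_div_mul_left _ _ (two_ne_zero' ℝ)]
    all_goals rfl
  have hpos : ∀ x ∈ Set.Ioo |t| 1, 0 ≤ F' x := by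
    intro x hx
    have hx0 : (0:ℝ) ≤ x := (abs_nonneg t).trans hx.1.le
    have := Real.pi_pos
    positivity
  have hint : IntegrableOn F' (Set.Ioc |t| 1) :=
    intervalIntegral.integrableOn_deriv_of_nonneg hcont hderiv hpos
  have hII : IntervalIntegrable F' volume |t| 1 :=
    (intervalIntegrable_iff_integrableOn_Ioc_of_le hab).mpr hint
  have hval := intervalIntegral.integral_eq_sub_of_hasDerivAt_of_le hab hcont hderiv hII
  rw [intervalIntegral.integral_of_le hab] at hval
  have hnn : 0 ≤ᵐ[volume.restrict (Set.Ioc |t| 1)] F' := by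
    refine (ae_restrict_iff' measurableSet_Ioc).mpr (ae_of_all _ fun x hx => ?_)
    have hx0 : (0:ℝ) ≤ x := (abs_nonneg t).trans hx.1.le
    have := Real.pi_pos
    positivity
  have h3 := ofReal_integral_eq_lintegral_ofReal hint hnn
  rw [hval] at h3
  rw [← h3]
  congr 1
  simp [hF, sq_abs]

/-- The inner integral over `x`: for each `t`,
`∫_{(0,1]} 2 h(t/x) dx` equals the semicircle density at `t`. -/
lemma inner_eq (t : ℝ) :
    ∫⁻ x in Set.Ioc (0:ℝ) 1, 2 * ENNReal.ofReal
        (if |t / x| < 1 then 1 / (π * Real.sqrt (1 - (t / x) ^ 2)) else 0)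
      = ENNReal.ofReal (if |t| < 1 then (2 / π) * Real.sqrt (1 - t ^ 2) else 0) := by
  by_cases ht : |t| < 1
  · rw [if_pos ht]
    have key : ∀ x ∈ Set.Ioc (0:ℝ) 1,
        2 * ENNReal.ofReal (if |t / x| < 1 then 1 / (π * Real.sqrt (1 - (t / x) ^ 2)) else 0)
          = (Set.Ioc |t| 1).indicator
              (fun x => ENNReal.ofReal (2 / π * (x / Real.sqrt (x ^ 2 - t ^ 2)))) x := by
      intro x hx
      have hx0 : 0 < x := hx.1
      by_cases hxt : |t| < x
      · rw [Set.indicator_of_mem (show x ∈ Set.Ioc |t| 1 from ⟨hxt, hx.2⟩)]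
        have hc : |t / x| < 1 := by
          rw [abs_div, abs_of_pos hx0]; exact (div_lt_one hx0).mpr hxt
        rw [if_pos hc]
        have ht2 : t ^ 2 < x ^ 2 := by nlinarith [sq_abs t, abs_nonneg t]
        have heq : 1 - (t / x) ^ 2 = (x ^ 2 - t ^ 2) / x ^ 2 := by
          field_simp
        have hsq : Real.sqrt (1 - (t / x) ^ 2) = Real.sqrt (x ^ 2 - t ^ 2) / x := by
          rw [heq, Real.sqrt_div (by linarith), Real.sqrt_sq hx0.le]
        have hs0 : 0 < Real.sqrt (x ^ 2 - t ^ 2) := Real.sqrt_pos.mpr (by linarith)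
        have hπ := Real.pi_pos
        rw [hsq, show (2:ℝ≥0∞) = ENNReal.ofReal 2 by simp,
          ← ENNReal.ofReal_mul (by norm_num)]
        congr 1
        field_simp
      · rw [Set.indicator_of_notMem (fun h => hxt h.1)]
        have hc : ¬ (|t / x| < 1) := by
          rw [abs_div, abs_of_pos hx0, not_lt]
          exact (one_le_div hx0).mpr (not_lt.mp hxt)
        rw [if_neg hc, ENNReal.ofReal_zero, mul_zero]
    rw [setLIntegral_congr_fun measurableSet_Ioc key,
      lintegral_indicator measurableSet_Ioc, Measure.restrict_restrict measurableSet_Ioc,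
      Set.Ioc_inter_Ioc, max_eq_left (abs_nonneg t), min_self]
    exact sqrt_lintegral t ht
  · rw [if_neg ht, ENNReal.ofReal_zero]
    have key : ∀ x ∈ Set.Ioc (0:ℝ) 1,
        2 * ENNReal.ofReal (if |t / x| < 1 then 1 / (π * Real.sqrt (1 - (t / x) ^ 2)) else 0)
          = 0 := by
      intro x hx
      have hx0 : 0 < x := hx.1
      have h1 : 1 ≤ |t| := not_lt.mp ht
      have hc : ¬ (|t / x| < 1) := by
        rw [abs_div, abs_of_pos hx0, not_lt, le_div_iff₀ hx0]
        nlinarith [hx.2, abs_nonneg t]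
      rw [if_neg hc, ENNReal.ofReal_zero, mul_zero]
    rw [setLIntegral_congr_fun measurableSet_Ioc key, lintegral_zero]

/-- The core computation: pushing forward the product of the two density measures
under multiplication gives the semicircle density. -/
lemma map_mul_prod :
    Measure.map (fun p : ℝ × ℝ => p.1 * p.2)
      ((volume.withDensity (fun r : ℝ => ENNReal.ofReal
          (if r ∈ Set.Icc (0 : ℝ) 1 then 2 * r else 0))).prod
        (volume.withDensity (fun t : ℝ => ENNReal.ofReal
          (if |t| < 1 then 1 / (π * Real.sqrt (1 - t ^ 2)) else 0))))
      = volume.withDensity (fun t : ℝ => ENNReal.ofReal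
          (if |t| < 1 then (2 / π) * Real.sqrt (1 - t ^ 2) else 0)) := by
  have hfm := fDen_meas
  have hhm := hDen_meas
  ext A hA
  rw [Measure.map_apply (by fun_prop : Measurable fun p : ℝ × ℝ => p.1 * p.2) hA,
    Measure.prod_apply ((by fun_prop : Measurable fun p : ℝ × ℝ => p.1 * p.2) hA),
    lintegral_withDensity_eq_lintegral_mul_non_measurable _ hfm
      (ae_of_all _ fun x => ENNReal.ofReal_lt_top),
    withDensity_apply _ hA]
  have step1 : ∀ x : ℝ,
      ((fun r : ℝ => ENNReal.ofReal (if r ∈ Set.Icc (0 : ℝ) 1 then 2 * r else 0)) *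
        fun x => (volume.withDensity (fun t : ℝ => ENNReal.ofReal
          (if |t| < 1 then 1 / (π * Real.sqrt (1 - t ^ 2)) else 0)))
          (Prod.mk x ⁻¹' ((fun p : ℝ × ℝ => p.1 * p.2) ⁻¹' A))) x
      = (Set.Ioc (0:ℝ) 1).indicator
          (fun x => ∫⁻ s in A, 2 * ENNReal.ofReal
            (if |s / x| < 1 then 1 / (π * Real.sqrt (1 - (s / x) ^ 2)) else 0)) x := by
    intro x
    simp only [Pi.mul_apply]
    by_cases hx : x ∈ Set.Ioc (0:ℝ) 1
    · have hx0 : 0 < x := hx.1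
      rw [Set.indicator_of_mem hx]
      have hAs : MeasurableSet (Prod.mk x ⁻¹' ((fun p : ℝ × ℝ => p.1 * p.2) ⁻¹' A)) :=
        measurable_prodMk_left ((measurable_fst.mul measurable_snd) hA)
      rw [withDensity_apply _ hAs, ← lintegral_indicator hAs]
      have hin : ∀ y : ℝ,
          (Prod.mk x ⁻¹' ((fun p : ℝ × ℝ => p.1 * p.2) ⁻¹' A)).indicator
            (fun t : ℝ => ENNReal.ofReal
              (if |t| < 1 then 1 / (π * Real.sqrt (1 - t ^ 2)) else 0)) y
          = (A.indicator (fun s : ℝ => ENNReal.ofReal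
              (if |s / x| < 1 then 1 / (π * Real.sqrt (1 - (s / x) ^ 2)) else 0))) (x * y) := by
        intro y
        by_cases hy : x * y ∈ A
        · rw [Set.indicator_of_mem hy,
            Set.indicator_of_mem (show y ∈ Prod.mk x ⁻¹' ((fun p : ℝ × ℝ => p.1 * p.2) ⁻¹' A) from hy),
            mul_div_cancel_left₀ y hx0.ne']
        · rw [Set.indicator_of_notMem hy,
            Set.indicator_of_notMem (show y ∉ Prod.mk x ⁻¹' ((fun p : ℝ × ℝ => p.1 * p.2) ⁻¹' A) from hy)]
      rw [lintegral_congr hin]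
      have hΦm : Measurable (A.indicator (fun s : ℝ => ENNReal.ofReal
          (if |s / x| < 1 then 1 / (π * Real.sqrt (1 - (s / x) ^ 2)) else 0))) :=
        (hhm.comp (measurable_id.div_const x)).indicator hA
      rw [lintegral_comp_const_mul x hx0 hΦm, lintegral_indicator hA]
      have hfx : ENNReal.ofReal (if x ∈ Set.Icc (0 : ℝ) 1 then 2 * x else 0)
          = ENNReal.ofReal (2 * x) := by
        rw [if_pos ⟨hx0.le, hx.2⟩]
      have hcm : (2:ℝ≥0∞) * ∫⁻ s in A, ENNReal.ofReal
            (if |s / x| < 1 then 1 / (π * Real.sqrt (1 - (s / x) ^ 2)) else 0)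
          = ∫⁻ s in A, 2 * ENNReal.ofReal
            (if |s / x| < 1 then 1 / (π * Real.sqrt (1 - (s / x) ^ 2)) else 0) :=
        (lintegral_const_mul 2 (show Measurable fun s : ℝ => ENNReal.ofReal
          (if |s / x| < 1 then 1 / (π * Real.sqrt (1 - (s / x) ^ 2)) else 0) from
            hhm.comp (measurable_id.div_const x))).symm
      rw [hfx, ← mul_assoc, ← ENNReal.ofReal_mul (by positivity),
        show 2 * x * x⁻¹ = 2 by field_simp,
        show ENNReal.ofReal 2 = (2:ℝ≥0∞) by simp, hcm]
    · rw [Set.indicator_of_notMem hx]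
      have hfx : ENNReal.ofReal (if x ∈ Set.Icc (0 : ℝ) 1 then 2 * x else 0) = 0 := by
        by_cases hx' : x ∈ Set.Icc (0 : ℝ) 1
        · have hx0 : x = 0 := by
            rcases not_and_or.mp hx with h | h
            · exact le_antisymm (not_lt.mp h) hx'.1
            · exact absurd hx'.2 h
          simp [hx', hx0]
        · simp [hx']
      rw [hfx, zero_mul]
  rw [lintegral_congr step1, lintegral_indicator measurableSet_Ioc]
  have hswap := lintegral_lintegral_swap (μ := volume.restrict (Set.Ioc (0:ℝ) 1))
    (ν := volume.restrict A)
    (f := fun x s => 2 * ENNReal.ofReal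
      (if |s / x| < 1 then 1 / (π * Real.sqrt (1 - (s / x) ^ 2)) else 0))
    (((hhm.comp (measurable_snd.div measurable_fst)).const_mul 2).aemeasurable)
  rw [hswap]
  exact setLIntegral_congr_fun hA (fun s _ => inner_eq s)

end ProductSemicircleAux

/-- If `R` has density `2r 1_{[0,1]}`, `S` has the arcsine density, and `R, S` are
independent, then `R * S` has the semicircle density `(2/π)√(1-t²) 1_{|t|<1}`. -/
theorem product_semicircle
    {Ω : Type*} [MeasurableSpace Ω] (P : Measure Ω) [IsProbabilityMeasure P]
    (R S : Ω → ℝ) (hRS : ProbabilityTheory.IndepFun R S P)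
    (hR : Measure.map R P
      = volume.withDensity (fun r : ℝ => ENNReal.ofReal
          (if r ∈ Set.Icc (0 : ℝ) 1 then 2 * r else 0)))
    (hS : Measure.map S P
      = volume.withDensity (fun t : ℝ => ENNReal.ofReal
          (if |t| < 1 then 1 / (π * Real.sqrt (1 - t ^ 2)) else 0))) :
    Measure.map (fun ω => R ω * S ω) P
      = volume.withDensity (fun t : ℝ => ENNReal.ofReal
          (if |t| < 1 then (2 / π) * Real.sqrt (1 - t ^ 2) else 0)) := by
  have hRae : AEMeasurable R P := by
    by_contra hc
    rw [Measure.map_of_not_aemeasurable hc] at hR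
    have h2 : (volume.withDensity (fun r : ℝ => ENNReal.ofReal
        (if r ∈ Set.Icc (0 : ℝ) 1 then 2 * r else 0))) (Set.Ioc (2⁻¹:ℝ) 1) = 0 := by
      rw [← hR]; rfl
    rw [withDensity_apply _ measurableSet_Ioc] at h2
    have hge : ENNReal.ofReal (2⁻¹ : ℝ)
        ≤ ∫⁻ r in Set.Ioc (2⁻¹:ℝ) 1, ENNReal.ofReal
            (if r ∈ Set.Icc (0 : ℝ) 1 then 2 * r else 0) ∂volume := by
      have hpt : ∀ r ∈ Set.Ioc (2⁻¹:ℝ) 1, (1:ℝ≥0∞) ≤ ENNReal.ofReal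
          (if r ∈ Set.Icc (0 : ℝ) 1 then 2 * r else 0) := by
        intro r hr
        have hmem : r ∈ Set.Icc (0:ℝ) 1 := Set.mem_Icc.mpr ⟨by linarith [hr.1], hr.2⟩
        rw [if_pos hmem, show (1:ℝ≥0∞) = ENNReal.ofReal 1 by simp]
        exact ENNReal.ofReal_le_ofReal (by linarith [hr.1])
      calc ENNReal.ofReal (2⁻¹:ℝ) = 1 * volume (Set.Ioc (2⁻¹:ℝ) 1) := by
            rw [Real.volume_Ioc]; norm_num
        _ = ∫⁻ _ in Set.Ioc (2⁻¹:ℝ) 1, (1:ℝ≥0∞) ∂volume := (setLIntegral_const _ 1).symm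
        _ ≤ _ := setLIntegral_mono ProductSemicircleAux.fDen_meas hpt
    rw [h2] at hge
    simp at hge
  have hSae : AEMeasurable S P := by
    by_contra hc
    rw [Measure.map_of_not_aemeasurable hc] at hS
    have h2 : (volume.withDensity (fun t : ℝ => ENNReal.ofReal
        (if |t| < 1 then 1 / (π * Real.sqrt (1 - t ^ 2)) else 0))) (Set.Ioc (0:ℝ) (2⁻¹:ℝ)) = 0 := by
      rw [← hS]; rfl
    rw [withDensity_apply _ measurableSet_Ioc] at h2
    have hπ := Real.pi_pos
    have hge : ENNReal.ofReal (π⁻¹ * 2⁻¹ : ℝ)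
        ≤ ∫⁻ t in Set.Ioc (0:ℝ) (2⁻¹:ℝ), ENNReal.ofReal
            (if |t| < 1 then 1 / (π * Real.sqrt (1 - t ^ 2)) else 0) ∂volume := by
      have hpt : ∀ t ∈ Set.Ioc (0:ℝ) (2⁻¹:ℝ), ENNReal.ofReal (π⁻¹ : ℝ) ≤ ENNReal.ofReal
          (if |t| < 1 then 1 / (π * Real.sqrt (1 - t ^ 2)) else 0) := by
        intro t htm
        have ht0 : 0 < t := htm.1
        have ht1 : t ≤ 2⁻¹ := htm.2
        have habs : |t| < 1 := by rw [abs_of_pos ht0]; linarith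
        rw [if_pos habs]
        apply ENNReal.ofReal_le_ofReal
        have hs1 : Real.sqrt (1 - t ^ 2) ≤ 1 := Real.sqrt_le_one.mpr (by nlinarith)
        have hs0 : 0 < Real.sqrt (1 - t ^ 2) := Real.sqrt_pos.mpr (by nlinarith)
        have h3 : 0 < π * Real.sqrt (1 - t ^ 2) := by positivity
        have h4 : π * Real.sqrt (1 - t ^ 2) ≤ π := by nlinarith
        calc (π⁻¹:ℝ) = 1 / π := (one_div π).symm
          _ ≤ 1 / (π * Real.sqrt (1 - t ^ 2)) := one_div_le_one_div_of_le h3 h4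
      calc ENNReal.ofReal (π⁻¹ * 2⁻¹ : ℝ)
          = ENNReal.ofReal (π⁻¹:ℝ) * volume (Set.Ioc (0:ℝ) (2⁻¹:ℝ)) := by
            rw [Real.volume_Ioc, ← ENNReal.ofReal_mul (by positivity)]; norm_num
        _ = ∫⁻ _ in Set.Ioc (0:ℝ) (2⁻¹:ℝ), ENNReal.ofReal (π⁻¹:ℝ) ∂volume :=
            (setLIntegral_const _ _).symm
        _ ≤ _ := setLIntegral_mono ProductSemicircleAux.hDen_meas hpt
    rw [h2] at hge
    simp only [nonpos_iff_eq_zero, ENNReal.ofReal_eq_zero] at hge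
    nlinarith [inv_pos.mpr hπ]
  have hpair := (ProbabilityTheory.indepFun_iff_map_prod_eq_prod_map_map hRae hSae).mp hRS
  rw [show (fun ω => R ω * S ω) = (fun p : ℝ × ℝ => p.1 * p.2) ∘ (fun ω => (R ω, S ω)) from rfl,
    ← AEMeasurable.map_map_of_aemeasurable
      ((by fun_prop : Measurable fun p : ℝ × ℝ => p.1 * p.2).aemeasurable) (hRae.prodMk hSae),
    hpair, hR, hS]
  exact ProductSemicircleAux.map_mul_prod
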